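/- For every ε ∈ (0,1), ∫₀¹ (min(1/√ε, 1/√(1−u)) − (2−√ε))² du ≤ log(1/ε). That is, if U is uniformly distributed on [0,1], then E[S_ε(U)²] ≤ log(1/ε). -/

import Mathlib

open MeasureTheory

universe u

/-- The statistic `S_ε(u) = min(1/√ε, 1/√(1−u)) − (2 − √ε)` for `u ∈ [0,1)`,
extended by the value `1/√ε − (2 − √ε)` at `u ≥ 1` (where `1/√(1−u)` is `+∞`). -/
noncomputable def Sstat (ε u : ℝ) : ℝ :=
  (if u < 1 then min (Real.sqrt ε)⁻¹ (Real.sqrt (1 - u))⁻¹ else (Real.sqrt ε)⁻¹)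
    - (2 - Real.sqrt ε)

lemma derivF (c u : ℝ) (hu : 0 < 1 - u) :
    HasDerivAt (fun u : ℝ => -Real.log (1-u) + 4*c*Real.sqrt (1-u) + c^2*u)
      (((Real.sqrt (1-u))⁻¹ - c)^2) u := by
  have h1 : HasDerivAt (fun u : ℝ => 1 - u) (-1) u := by
    simpa using (hasDerivAt_id' u).const_sub (1:ℝ)
  have hlog : HasDerivAt (fun u : ℝ => Real.log (1-u)) ((1-u)⁻¹ * (-1)) u :=
    (Real.hasDerivAt_log hu.ne').comp u h1
  have hsqrt : HasDerivAt (fun u : ℝ => Real.sqrt (1-u))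
      (1 / (2 * Real.sqrt (1-u)) * (-1)) u :=
    (Real.hasDerivAt_sqrt hu.ne').comp u h1
  have h := hlog.neg.add (((hasDerivAt_const u (4*c)).mul hsqrt).add
      ((hasDerivAt_const u (c^2)).mul (hasDerivAt_id u)))
  have heq : -((1-u)⁻¹*(-1)) + (0 * Real.sqrt (1-u) + 4*c*(1/(2*Real.sqrt (1-u))*(-1))
      + (0 * id u + c^2*1)) = ((Real.sqrt (1-u))⁻¹ - c)^2 := by
    have hs : (0:ℝ) < Real.sqrt (1-u) := Real.sqrt_pos.2 hu
    have hsq : Real.sqrt (1-u) ^ 2 = 1 - u := Real.sq_sqrt hu.le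
    rw [show (1-u)⁻¹ = (Real.sqrt (1-u)^2)⁻¹ by rw [hsq]]
    clear hsq hlog hsqrt h h1 hu
    generalize Real.sqrt (1-u) = s at hs ⊢
    field_simp
    ring
  have h2 := heq ▸ h
  exact h2.congr_of_eventuallyEq (by filter_upwards with x; simp only [Pi.add_apply, Pi.neg_apply, Pi.mul_apply, id]; ring)

lemma key (ε : ℝ) (hε0 : 0 < ε) (hε1 : ε < 1) :
    (∫ u in (0:ℝ)..1,
      (min (Real.sqrt ε)⁻¹ (Real.sqrt (1 - u))⁻¹ - (2 - Real.sqrt ε)) ^ 2)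
      = Real.log (1/ε) - (3 - 4*Real.sqrt ε + ε) := by
  set s := Real.sqrt ε with hs_def
  set c := 2 - s with hc_def
  have hs : 0 < s := Real.sqrt_pos.2 hε0
  have hsε : s^2 = ε := Real.sq_sqrt hε0.le
  have hle1 : (0:ℝ) ≤ 1 - ε := by linarith
  have hle2 : (1:ℝ) - ε ≤ 1 := by linarith
  set f : ℝ → ℝ := fun u => (min s⁻¹ (Real.sqrt (1-u))⁻¹ - c)^2 with hf_def
  -- on [0, 1-ε], f u = ((√(1-u))⁻¹ - c)^2
  have hcong1 : Set.EqOn f (fun u => ((Real.sqrt (1-u))⁻¹ - c)^2) (Set.uIcc 0 (1-ε)) := by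
    intro u hu
    rw [Set.uIcc_of_le hle1] at hu
    obtain ⟨hu0, hu1⟩ := hu
    have h1u : ε ≤ 1 - u := by linarith
    have hsq : s ≤ Real.sqrt (1-u) := by
      rw [hs_def]; exact Real.sqrt_le_sqrt h1u
    have : (Real.sqrt (1-u))⁻¹ ≤ s⁻¹ := inv_anti₀ hs hsq
    simp only [hf_def, min_eq_right this]
  have hcont1 : ContinuousOn (fun u => ((Real.sqrt (1-u))⁻¹ - c)^2) (Set.uIcc 0 (1-ε)) := by
    rw [Set.uIcc_of_le hle1]
    apply ContinuousOn.pow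
    apply ContinuousOn.sub _ continuousOn_const
    apply ContinuousOn.inv₀
    · exact (Real.continuous_sqrt.comp (continuous_const.sub continuous_id)).continuousOn
    · intro u hu
      have : ε ≤ 1 - u := by linarith [hu.2]
      exact (Real.sqrt_pos.2 (by linarith)).ne'
  have hint1 : IntervalIntegrable f volume 0 (1-ε) :=
    ((hcont1.congr hcong1).intervalIntegrable)
  -- on (1-ε, 1), f u = (s⁻¹ - c)^2 (a.e., differing only at u = 1)
  have hone : ∀ᵐ u : ℝ ∂volume, u ≠ 1 := by
    refine (ae_iff).mpr ?_
    simp only [ne_eq, not_not]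
    have : {u : ℝ | u = 1} = {1} := rfl
    rw [this]; exact Real.volume_singleton
  have hpt : ∀ u, u ∈ Set.Ioc (1-ε) 1 → u ≠ 1 → f u = (s⁻¹ - c)^2 := by
    intro u hmem hu
    have hu1 : u < 1 := lt_of_le_of_ne hmem.2 hu
    have h1u : 0 < 1 - u := by linarith
    have h1e : 1 - u ≤ ε := by linarith [hmem.1]
    have hsq : Real.sqrt (1-u) ≤ s := by
      rw [hs_def]; exact Real.sqrt_le_sqrt h1e
    have : s⁻¹ ≤ (Real.sqrt (1-u))⁻¹ := inv_anti₀ (Real.sqrt_pos.2 h1u) hsq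
    simp only [hf_def, min_eq_left this]
  have hcong2 : f =ᶠ[ae (volume.restrict (Set.Ioc (1-ε) 1))] (fun _ => (s⁻¹ - c)^2) := by
    filter_upwards [ae_restrict_of_ae hone, ae_restrict_mem measurableSet_Ioc] with u hu hmem
    exact hpt u hmem hu
  have hint2 : IntervalIntegrable f volume (1-ε) 1 := by
    rw [intervalIntegrable_iff_integrableOn_Ioc_of_le hle2]
    refine (integrableOn_const ?_).congr hcong2.symm
    rw [Real.volume_Ioc]; exact ENNReal.ofReal_ne_top
  -- value of the first piece
  have hval1 : ∫ u in (0:ℝ)..(1-ε), f u = Real.log (1/ε) + 4*c*s + c^2*(1-ε) - 4*c := by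
    rw [intervalIntegral.integral_congr hcong1]
    rw [intervalIntegral.integral_eq_sub_of_hasDerivAt
      (f := fun u : ℝ => -Real.log (1-u) + 4*c*Real.sqrt (1-u) + c^2*u)
      (fun u hu => by
        rw [Set.uIcc_of_le hle1] at hu
        exact derivF c u (by linarith [hu.2]))
      (hcont1.intervalIntegrable)]
    have e1 : (1:ℝ) - (1 - ε) = ε := by ring
    rw [e1]
    simp only [sub_zero, mul_zero, Real.sqrt_one, Real.log_one, mul_one, ← hs_def]
    rw [Real.log_div one_ne_zero hε0.ne', Real.log_one]
    ring
  -- value of the second piece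
  have hval2 : ∫ u in (1-ε:ℝ)..1, f u = ε * (s⁻¹ - c)^2 := by
    rw [intervalIntegral.integral_congr_ae (g := fun _ => (s⁻¹ - c)^2) ?_]
    · rw [intervalIntegral.integral_const, smul_eq_mul]; ring
    · filter_upwards [hone] with u hu hmem
      rw [Set.uIoc_of_le hle2] at hmem
      exact hpt u hmem hu
  have hsplit := intervalIntegral.integral_add_adjacent_intervals hint1 hint2
  rw [← hsplit, hval1, hval2]
  have hε' : ε * (s⁻¹ - c)^2 = (1 - s*c)^2 := by
    rw [← hsε]; field_simp
  rw [hε']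
  rw [hc_def]
  nlinarith [hsε]

lemma Sstat_measurable (ε : ℝ) : Measurable (fun u => Sstat ε u ^ 2) := by
  unfold Sstat
  refine ((Measurable.ite (measurableSet_lt measurable_id measurable_const) ?_
    measurable_const).sub measurable_const).pow_const 2
  exact measurable_const.min
    ((Real.continuous_sqrt.measurable.comp (measurable_const.sub measurable_id)).inv)

/-- For every `ε ∈ (0,1)`,
`∫₀¹ (min(1/√ε, 1/√(1−u)) − (2−√ε))² du ≤ log(1/ε)`; that is, if `U` is uniformly
distributed on `[0,1]` then `E[S_ε(U)²] ≤ log(1/ε)`. -/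
theorem integral_sq_Sstat_le (ε : ℝ) (hε : ε ∈ Set.Ioo (0:ℝ) 1) :
    (∫ u in (0:ℝ)..1,
        (min (Real.sqrt ε)⁻¹ (Real.sqrt (1 - u))⁻¹ - (2 - Real.sqrt ε)) ^ 2)
      ≤ Real.log (1/ε) ∧
    ∀ {Ω : Type u} [MeasurableSpace Ω] (μ : Measure Ω) (U : Ω → ℝ),
      IsProbabilityMeasure μ →
      Measure.map U μ = volume.restrict (Set.Icc (0:ℝ) 1) →
      ∫ ω, (Sstat ε (U ω)) ^ 2 ∂μ ≤ Real.log (1/ε) := by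
  obtain ⟨hε0, hε1⟩ := hε
  have hs : 0 < Real.sqrt ε := Real.sqrt_pos.2 hε0
  have hsε : Real.sqrt ε ^ 2 = ε := Real.sq_sqrt hε0.le
  have hmain : (∫ u in (0:ℝ)..1,
      (min (Real.sqrt ε)⁻¹ (Real.sqrt (1 - u))⁻¹ - (2 - Real.sqrt ε)) ^ 2)
      ≤ Real.log (1/ε) := by
    have hs1 : Real.sqrt ε < 1 := by
      have := Real.sqrt_lt_sqrt hε0.le hε1
      rwa [Real.sqrt_one] at this
    rw [key ε hε0 hε1]
    nlinarith [hsε, hs, hs1]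
  refine ⟨hmain, ?_⟩
  intro Ω _ μ U hprob hmap
  have hUae : AEMeasurable U μ := by
    by_contra h
    rw [Measure.map_of_not_aemeasurable h] at hmap
    have h1 := congrArg (fun m : Measure ℝ => m Set.univ) hmap
    simp [Real.volume_Icc] at h1
  have hone : ∀ᵐ u : ℝ ∂volume, u ≠ 1 := by
    refine (ae_iff).mpr ?_
    simp only [ne_eq, not_not]
    have : {u : ℝ | u = 1} = {1} := rfl
    rw [this]; exact Real.volume_singleton
  have hcalc : ∫ ω, (Sstat ε (U ω)) ^ 2 ∂μ = ∫ u in (0:ℝ)..1,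
      (min (Real.sqrt ε)⁻¹ (Real.sqrt (1 - u))⁻¹ - (2 - Real.sqrt ε)) ^ 2 := by
    calc ∫ ω, (Sstat ε (U ω)) ^ 2 ∂μ
        = ∫ x, Sstat ε x ^ 2 ∂(Measure.map U μ) :=
          (integral_map hUae (Sstat_measurable ε).aestronglyMeasurable).symm
      _ = ∫ x in Set.Icc (0:ℝ) 1, Sstat ε x ^ 2 := by rw [hmap]
      _ = ∫ x in Set.Ioc (0:ℝ) 1, Sstat ε x ^ 2 := integral_Icc_eq_integral_Ioc
      _ = ∫ x in Set.Ioc (0:ℝ) 1,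
            (min (Real.sqrt ε)⁻¹ (Real.sqrt (1 - x))⁻¹ - (2 - Real.sqrt ε)) ^ 2 := by
          apply integral_congr_ae
          filter_upwards [ae_restrict_of_ae hone, ae_restrict_mem measurableSet_Ioc]
            with x hx1 hmem
          have h : x < 1 := lt_of_le_of_ne hmem.2 hx1
          simp [Sstat, h]
      _ = ∫ u in (0:ℝ)..1,
            (min (Real.sqrt ε)⁻¹ (Real.sqrt (1 - u))⁻¹ - (2 - Real.sqrt ε)) ^ 2 :=
          (intervalIntegral.integral_of_le zero_le_one).symm
  rw [hcalc]
  exact hmain
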